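/- (Hodge decomposition.) Let A be a real n × p matrix and B a real q × n matrix with B·A = 0. In the Euclidean space ℝⁿ, let G be the range of the linear map x ↦ A·x (the gradient space), let C be the range of x ↦ Bᵀ·x (the curl space), and let H be the kernel of the linear map x ↦ (A·Aᵀ + Bᵀ·B)·x (the harmonic space). Then G, C and H are pairwise orthogonal subspaces and their sum is all of ℝⁿ: ℝⁿ = G ⊕ H ⊕ C as an internal orthogonal direct sum. -/

import Mathlib

open Matrix

section Aux

private lemma inner_eq_dot {n : ℕ} (x y : EuclideanSpace ℝ (Fin n)) :
    inner ℝ x y = (x : Fin n → ℝ) ⬝ᵥ (y : Fin n → ℝ) := by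
  simp [PiLp.inner_apply, dotProduct, mul_comm]

private lemma mulVec_dot {a b : ℕ} (M : Matrix (Fin a) (Fin b) ℝ)
    (y : Fin b → ℝ) (v : Fin a → ℝ) : (M *ᵥ y) ⬝ᵥ v = y ⬝ᵥ (Mᵀ *ᵥ v) := by
  rw [dotProduct_comm, dotProduct_mulVec, ← mulVec_transpose, dotProduct_comm]

private lemma dot_self_nonneg {a : ℕ} (v : Fin a → ℝ) : 0 ≤ v ⬝ᵥ v :=
  Finset.sum_nonneg fun i _ => mul_self_nonneg _

end Aux

/-- Hodge decomposition: the gradient space `G`, harmonic space `H` and curl space `C`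
are pairwise orthogonal and span all of Euclidean `ℝⁿ`. -/
theorem hodge_decomposition (n p q : ℕ)
    (A : Matrix (Fin n) (Fin p) ℝ) (B : Matrix (Fin q) (Fin n) ℝ)
    (hBA : B * A = 0)
    (G C H : Submodule ℝ (EuclideanSpace ℝ (Fin n)))
    (hG : ∀ x : EuclideanSpace ℝ (Fin n), x ∈ G ↔ ∃ y : Fin p → ℝ, A *ᵥ y = x)
    (hC : ∀ x : EuclideanSpace ℝ (Fin n), x ∈ C ↔ ∃ z : Fin q → ℝ, Bᵀ *ᵥ z = x)
    (hH : ∀ x : EuclideanSpace ℝ (Fin n), x ∈ H ↔ (A * Aᵀ + Bᵀ * B) *ᵥ x = 0) :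
    G ⟂ C ∧ G ⟂ H ∧ C ⟂ H ∧ G ⊔ H ⊔ C = ⊤ := by
  -- membership in H gives Aᵀ x = 0 and B x = 0
  have hHsplit : ∀ x : EuclideanSpace ℝ (Fin n), x ∈ H →
      Aᵀ *ᵥ (x : Fin n → ℝ) = 0 ∧ B *ᵥ (x : Fin n → ℝ) = 0 := by
    intro x hx
    have hL := (hH x).1 hx
    have h0 : ((A * Aᵀ + Bᵀ * B) *ᵥ (x : Fin n → ℝ)) ⬝ᵥ x = 0 := by rw [hL]; simp
    have e1 : ((A * Aᵀ) *ᵥ (x : Fin n → ℝ)) ⬝ᵥ x = (Aᵀ *ᵥ x) ⬝ᵥ (Aᵀ *ᵥ x) := by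
      rw [← mulVec_mulVec, mulVec_dot]
    have e2 : ((Bᵀ * B) *ᵥ (x : Fin n → ℝ)) ⬝ᵥ x = (B *ᵥ x) ⬝ᵥ (B *ᵥ x) := by
      rw [← mulVec_mulVec, mulVec_dot, transpose_transpose]
    have hexp : ((A * Aᵀ + Bᵀ * B) *ᵥ (x : Fin n → ℝ)) ⬝ᵥ x
        = (Aᵀ *ᵥ x) ⬝ᵥ (Aᵀ *ᵥ x) + (B *ᵥ x) ⬝ᵥ (B *ᵥ x) := by
      rw [add_mulVec, add_dotProduct, e1, e2]
    rw [hexp] at h0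
    have h1 : (Aᵀ *ᵥ (x : Fin n → ℝ)) ⬝ᵥ (Aᵀ *ᵥ x) = 0 ∧
        (B *ᵥ (x : Fin n → ℝ)) ⬝ᵥ (B *ᵥ x) = 0 := by
      constructor <;> nlinarith [dot_self_nonneg (Aᵀ *ᵥ (x : Fin n → ℝ)),
        dot_self_nonneg (B *ᵥ (x : Fin n → ℝ))]
    exact ⟨dotProduct_self_eq_zero.mp h1.1, dotProduct_self_eq_zero.mp h1.2⟩
  have hGC : G ⟂ C := by
    rw [Submodule.isOrtho_iff_inner_eq]
    rintro u hu v hv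
    obtain ⟨y, hy⟩ := (hG u).1 hu
    obtain ⟨z, hz⟩ := (hC v).1 hv
    rw [inner_eq_dot, ← hy, ← hz, mulVec_dot, mulVec_mulVec, ← transpose_mul, hBA]
    simp
  have hGH : G ⟂ H := by
    rw [Submodule.isOrtho_iff_inner_eq]
    rintro u hu v hv
    obtain ⟨y, hy⟩ := (hG u).1 hu
    rw [inner_eq_dot, ← hy, mulVec_dot, (hHsplit v hv).1]
    simp
  have hCH : C ⟂ H := by
    rw [Submodule.isOrtho_iff_inner_eq]
    rintro u hu v hv
    obtain ⟨z, hz⟩ := (hC u).1 hu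
    rw [inner_eq_dot, ← hz, mulVec_dot, transpose_transpose, (hHsplit v hv).2]
    simp
  refine ⟨hGC, hGH, hCH, ?_⟩
  rw [← Submodule.orthogonal_eq_bot_iff, Submodule.eq_bot_iff]
  intro x hx
  have hxG : x ∈ Gᗮ := (Submodule.orthogonal_le (le_sup_left.trans le_sup_left)) hx
  have hxH : x ∈ Hᗮ := (Submodule.orthogonal_le (le_sup_right.trans le_sup_left)) hx
  have hxC : x ∈ Cᗮ := (Submodule.orthogonal_le le_sup_right) hx
  -- x ⟂ G gives Aᵀ x = 0
  have hAx : Aᵀ *ᵥ (x : Fin n → ℝ) = 0 := by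
    ext i
    have := (Submodule.mem_orthogonal _ _).1 hxG _
      ((hG (WithLp.toLp 2 (A *ᵥ (fun j => if j = i then 1 else 0)))).2 ⟨_, rfl⟩)
    rw [inner_eq_dot, WithLp.ofLp_toLp, mulVec_dot] at this
    simpa [dotProduct] using this
  have hBx : B *ᵥ (x : Fin n → ℝ) = 0 := by
    ext i
    have := (Submodule.mem_orthogonal _ _).1 hxC _
      ((hC (WithLp.toLp 2 (Bᵀ *ᵥ (fun j => if j = i then 1 else 0)))).2 ⟨_, rfl⟩)
    rw [inner_eq_dot, WithLp.ofLp_toLp, mulVec_dot, transpose_transpose] at this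
    simpa [dotProduct] using this
  have hxH' : x ∈ H := by
    rw [hH, add_mulVec, ← mulVec_mulVec, ← mulVec_mulVec, hAx, hBx]
    simp
  have h0 := (Submodule.mem_orthogonal _ _).1 hxH x hxH'
  rw [inner_eq_dot, dotProduct_self_eq_zero] at h0
  simpa using h0
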